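/- Iterated Laplacian of the phase-space Gaussian, one-dimensional case: Let ε > 0 and d = 1. Then for all N ∈ ℕ and all z = (q,p) ∈ ℝ², (−(ε/2) Δ)^N G(z) = N! · G(z) · Σ_{n=0}^{N} binom(N, n) L_n(ρ(z)), where G(q,p) = (πε)^{−1} e^{−(q²+p²)/ε}, Δ = ∂²/∂q² + ∂²/∂p², and ρ(q,p) = (2/ε)(q² + p²). -/

import Mathlib

open Finset

noncomputable section

/-- The `n`-th Laguerre polynomial. -/
def laguerre (n : ℕ) (x : ℝ) : ℝ :=
  ∑ j ∈ Finset.range (n + 1), (n.choose (n - j) : ℝ) * (-x) ^ j / (Nat.factorial j)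

/-- The Laplacian `∂²/∂q² + ∂²/∂p²` on `ℝ²`. -/
def lap2 (f : ℝ × ℝ → ℝ) : ℝ × ℝ → ℝ := fun z =>
  iteratedDeriv 2 (fun t => f (t, z.2)) z.1 + iteratedDeriv 2 (fun t => f (z.1, t)) z.2

/-- The phase-space Gaussian `G(q,p) = (πε)^{−1} e^{−(q²+p²)/ε}` on `ℝ²`. -/
def gauss2 (ε : ℝ) : ℝ × ℝ → ℝ := fun z =>
  (Real.pi * ε)⁻¹ * Real.exp (-(z.1 ^ 2 + z.2 ^ 2) / ε)

open Polynomial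

lemma keyNat (N m : ℕ) :
    (2*m+3) * N.choose (m+1) + (m+1) * N.choose m + (m+2) * N.choose (m+2)
      = (N+1) * (N+1).choose (m+1) := by
  rcases le_or_gt (m+1) N with h | h
  · have h1 := Nat.choose_succ_right_eq N (m+1)
    have h2 := Nat.choose_succ_right_eq N m
    have h3 : (N+1).choose (m+1) = N.choose m + N.choose (m+1) := Nat.choose_succ_succ' N m
    have hm : m ≤ N := by omega
    zify [h, hm] at h1 h2 ⊢
    rw [h3]
    push_cast
    linear_combination h1 + h2
  · have c1 : N.choose (m+1) = 0 := Nat.choose_eq_zero_of_lt h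
    have c2 : N.choose (m+2) = 0 := Nat.choose_eq_zero_of_lt (by omega)
    have h3 : (N+1).choose (m+1) = N.choose m + N.choose (m+1) := Nat.choose_succ_succ' N m
    rcases lt_or_eq_of_le (by omega : N ≤ m) with h4 | h4
    · simp [c1, c2, h3, Nat.choose_eq_zero_of_lt h4]
    · subst h4; simp [c1, c2, h3]

/-- Coefficients of the polynomial `N! ∑_{n≤N} C(N,n) L_n`. -/
def aco (N j : ℕ) : ℝ := (-2⁻¹ : ℝ)^j * 2^N * N.factorial * N.choose j / j.factorial

def Sp (N : ℕ) : Polynomial ℝ := ∑ j ∈ Finset.range (N+1), Polynomial.monomial j (aco N j)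

lemma coeff_Sp (N k : ℕ) : (Sp N).coeff k = aco N k := by
  rw [Sp, Polynomial.finset_sum_coeff]
  simp only [Polynomial.coeff_monomial]
  rw [Finset.sum_ite_eq' (Finset.range (N+1)) k]
  split
  · rfl
  · rename_i hk
    simp only [Finset.mem_range, not_lt] at hk
    simp [aco, Nat.choose_eq_zero_of_lt (by omega : N < k)]

lemma aco_succ (N m : ℕ) :
    2 * aco N (m+1) - aco N m - 4 * (aco N (m+2) * (m+2))
      + 4 * (aco N (m+1) * (m+1)) - 4 * (aco N (m+2) * (m+2) * (m+1))
      = aco (N+1) (m+1) := by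
  have hc : ((2*m+3) * N.choose (m+1) + (m+1) * N.choose m + (m+2) * N.choose (m+2) : ℝ)
      = (N+1) * (N+1).choose (m+1) := by exact_mod_cast keyNat N m
  have fm : (m.factorial : ℝ) ≠ 0 := by exact_mod_cast m.factorial_ne_zero
  have h1 : ((m:ℝ)+1) ≠ 0 := by positivity
  have h2 : ((m:ℝ)+2) ≠ 0 := by positivity
  simp only [aco, Nat.factorial_succ, pow_succ]
  push_cast
  generalize (-2⁻¹:ℝ)^m = u
  generalize (m.factorial : ℝ) = v at fm ⊢
  generalize ((2:ℝ))^N = w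
  generalize (N.factorial : ℝ) = F
  field_simp
  linear_combination (-(4 * u*w*F*((m:ℝ)+2))) * hc

lemma aco_zero (N : ℕ) : 2 * aco N 0 - 4 * (aco N 1 * 1) = aco (N+1) 0 := by
  simp only [aco, Nat.choose_zero_right, Nat.choose_one_right, Nat.factorial_zero,
    Nat.factorial_one, Nat.factorial_succ, pow_succ, pow_zero]
  push_cast
  ring

lemma Trec (N : ℕ) :
    C 2 * Sp N - X * Sp N - C 4 * derivative (Sp N)
      + C 4 * (X * derivative (Sp N)) - C 4 * (X * derivative (derivative (Sp N)))
      = Sp (N+1) := by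
  ext k
  simp only [coeff_sub, coeff_add, coeff_C_mul, coeff_Sp]
  cases k with
  | zero =>
      simp only [mul_coeff_zero, coeff_X_zero, zero_mul, coeff_derivative, coeff_Sp]
      push_cast
      linear_combination aco_zero N
  | succ m =>
      simp only [coeff_X_mul, coeff_derivative, coeff_Sp]
      push_cast
      linear_combination aco_succ N m

lemma sum_choose_mul (N j : ℕ) (hj : j ≤ N) :
    ∑ n ∈ range (N+1), N.choose n * n.choose j = N.choose j * 2^(N-j) := by
  have h1 : ∑ n ∈ range (N+1), N.choose n * n.choose j
      = ∑ n ∈ Finset.Ico j (N+1), N.choose n * n.choose j := by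
    refine (Finset.sum_subset ?_ ?_).symm
    · intro n hn
      simp only [Finset.mem_Ico] at hn
      exact Finset.mem_range.2 (by omega)
    · intro n hn hn2
      simp only [Finset.mem_range] at hn
      simp only [Finset.mem_Ico, not_and, not_lt] at hn2
      have hnj : n < j := by
        by_contra hcon
        exact absurd hn (by simpa using hn2 (by omega))
      simp [Nat.choose_eq_zero_of_lt hnj]
  rw [h1, Finset.sum_Ico_eq_sum_range]
  rw [← Nat.sum_range_choose (N-j), Finset.mul_sum]
  have h2 : N + 1 - j = N - j + 1 := by omega
  rw [h2]
  refine Finset.sum_congr rfl ?_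
  intro i hi
  simp only [Finset.mem_range] at hi
  have hij : j + i - j = i := by omega
  rw [Nat.choose_mul (n := N) (show j ≤ j + i by omega), hij]

lemma eval_Sp (N : ℕ) (x : ℝ) :
    (Sp N).eval x = N.factorial * ∑ n ∈ range (N+1), (N.choose n : ℝ) * laguerre n x := by
  have step1 : ∀ n ∈ range (N+1), (N.choose n : ℝ) * laguerre n x
      = ∑ j ∈ range (N+1), (N.choose n : ℝ) * (n.choose j : ℝ) * (-x)^j / j.factorial := by
    intro n hn
    simp only [Finset.mem_range] at hn
    rw [laguerre]
    have e1 : ∑ j ∈ range (n+1), (n.choose (n-j) : ℝ) * (-x)^j / j.factorial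
        = ∑ j ∈ range (n+1), (n.choose j : ℝ) * (-x)^j / j.factorial := by
      refine Finset.sum_congr rfl ?_
      intro j hj
      simp only [Finset.mem_range] at hj
      rw [Nat.choose_symm (by omega)]
    rw [e1]
    have e2 : ∑ j ∈ range (n+1), (n.choose j : ℝ) * (-x)^j / j.factorial
        = ∑ j ∈ range (N+1), (n.choose j : ℝ) * (-x)^j / j.factorial := by
      refine Finset.sum_subset (Finset.range_subset_range.2 (by omega)) ?_
      intro j _ hj2
      simp only [Finset.mem_range, not_lt] at hj2
      simp [Nat.choose_eq_zero_of_lt (by omega : n < j)]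
    rw [e2, Finset.mul_sum]
    refine Finset.sum_congr rfl fun j _ => by ring
  rw [Finset.sum_congr rfl step1, Finset.sum_comm]
  rw [Sp, Polynomial.eval_finset_sum]
  simp only [Polynomial.eval_monomial]
  rw [Finset.mul_sum]
  refine Finset.sum_congr rfl ?_
  intro j hj
  simp only [Finset.mem_range] at hj
  have hs : ∑ n ∈ range (N+1), (N.choose n : ℝ) * (n.choose j : ℝ) * (-x)^j / j.factorial
      = (∑ n ∈ range (N+1), (N.choose n * n.choose j : ℕ) : ℝ) * ((-x)^j / j.factorial) := by
    push_cast
    rw [Finset.sum_mul]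
    refine Finset.sum_congr rfl fun n _ => by ring
  rw [hs, ← Nat.cast_sum, sum_choose_mul N j (by omega)]
  have fj : (j.factorial : ℝ) ≠ 0 := by exact_mod_cast j.factorial_ne_zero
  have hpow : (2:ℝ)^(N-j) * 2^j = 2^N := by
    rw [← pow_add]; congr 1; omega
  rw [aco]
  push_cast
  have : (-x)^j = (-1)^j * x^j := by rw [neg_pow]
  rw [this]
  have h2 : ((-2⁻¹:ℝ))^j = (-1)^j * (2^j)⁻¹ := by
    rw [neg_pow, inv_pow]
  rw [h2]
  field_simp
  linear_combination (-(x^j * (N.choose j : ℝ))) * hpow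

/-- Auxiliary family of functions closed under differentiation. -/
def Fn (A ε c : ℝ) (Q R : Polynomial ℝ) : ℝ → ℝ := fun t =>
  A * Real.exp (-(t^2+c)/ε) *
    (Q.eval (2/ε*(t^2+c)) + t * R.eval (2/ε*(t^2+c)))

def Dtop (ε c : ℝ) (R : Polynomial ℝ) : Polynomial ℝ :=
  R + (C (ε/2) * X - C c) * (C ε⁻¹ * (C 4 * derivative R - C 2 * R))

def Dbot (ε : ℝ) (Q : Polynomial ℝ) : Polynomial ℝ :=
  C ε⁻¹ * (C 4 * derivative Q - C 2 * Q)

lemma hasDerivAt_Fn (A ε c : ℝ) (hε : ε ≠ 0) (Q R : Polynomial ℝ) (t : ℝ) :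
    HasDerivAt (Fn A ε c Q R) (Fn A ε c (Dtop ε c R) (Dbot ε Q) t) t := by
  have hs : HasDerivAt (fun t : ℝ => 2/ε*(t^2+c)) (2/ε*(2*t)) t := by
    have := ((hasDerivAt_pow 2 t).add_const c).const_mul (2/ε)
    simpa using this
  have hu : HasDerivAt (fun t : ℝ => -(t^2+c)/ε) (-(2*t)/ε) t := by
    have := (((hasDerivAt_pow 2 t).add_const c).neg).div_const ε
    simpa using this
  have hexp := hu.exp
  have hQ := (Q.hasDerivAt (2/ε*(t^2+c))).comp t hs
  have hR := (R.hasDerivAt (2/ε*(t^2+c))).comp t hs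
  have hv := hQ.add ((hasDerivAt_id t).mul hR)
  have htot := (hexp.const_mul A).mul hv
  refine htot.congr_deriv ?_
  simp only [Fn, Dtop, Dbot, eval_add, eval_mul, eval_sub, eval_C, eval_X, id_eq,
    Pi.add_apply, Pi.mul_apply, Function.comp_apply]
  field_simp
  ring

lemma deriv_Fn (A ε c : ℝ) (hε : ε ≠ 0) (Q R : Polynomial ℝ) :
    deriv (Fn A ε c Q R) = Fn A ε c (Dtop ε c R) (Dbot ε Q) := by
  funext t
  exact (hasDerivAt_Fn A ε c hε Q R t).deriv

lemma iteratedDeriv_two_Fn (A ε c : ℝ) (hε : ε ≠ 0) (Q : Polynomial ℝ) (t : ℝ) :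
    iteratedDeriv 2 (Fn A ε c Q 0) t
      = Fn A ε c (Dtop ε c (Dbot ε Q)) (Dbot ε (Dtop ε c 0)) t := by
  rw [show (2:ℕ) = 1 + 1 from rfl, iteratedDeriv_succ, iteratedDeriv_one]
  rw [deriv_Fn A ε c hε Q 0]
  have h0 : Dtop ε c 0 = 0 := by simp [Dtop]
  rw [show Fn A ε c (Dtop ε c 0) (Dbot ε Q) = Fn A ε c 0 (Dbot ε Q) from by rw [h0]]
  rw [deriv_Fn A ε c hε 0 (Dbot ε Q)]
  rw [h0, show Dbot ε (0 : Polynomial ℝ) = 0 from by simp [Dbot]]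

lemma step (ε : ℝ) (hε : ε ≠ 0) (Q : Polynomial ℝ) (w : ℝ × ℝ) :
    -(ε/2) * lap2 (fun z => gauss2 ε z * Q.eval (2/ε*(z.1^2+z.2^2))) w
    = gauss2 ε w * (C 2 * Q - X * Q - C 4 * derivative Q + C 4 * (X * derivative Q)
        - C 4 * (X * derivative (derivative Q))).eval (2/ε*(w.1^2+w.2^2)) := by
  have e1 : (fun t => gauss2 ε (t, w.2) * Q.eval (2/ε*(t^2+w.2^2)))
      = Fn ((Real.pi*ε)⁻¹) ε (w.2^2) Q 0 := by
    funext t; simp only [Fn, gauss2, eval_zero, mul_zero, add_zero]; try ring_nf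
  have e2 : (fun t => gauss2 ε (w.1, t) * Q.eval (2/ε*(w.1^2+t^2)))
      = Fn ((Real.pi*ε)⁻¹) ε (w.1^2) Q 0 := by
    funext t; simp only [Fn, gauss2, eval_zero, mul_zero, add_zero]; try ring_nf
  have l1 : lap2 (fun z => gauss2 ε z * Q.eval (2/ε*(z.1^2+z.2^2))) w
      = Fn ((Real.pi*ε)⁻¹) ε (w.2^2) (Dtop ε (w.2^2) (Dbot ε Q)) (Dbot ε (Dtop ε (w.2^2) 0)) w.1
      + Fn ((Real.pi*ε)⁻¹) ε (w.1^2) (Dtop ε (w.1^2) (Dbot ε Q)) (Dbot ε (Dtop ε (w.1^2) 0)) w.2 := by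
    rw [lap2]
    rw [show (fun t => (fun z : ℝ × ℝ => gauss2 ε z * Q.eval (2/ε*(z.1^2+z.2^2))) (t, w.2))
        = Fn ((Real.pi*ε)⁻¹) ε (w.2^2) Q 0 from e1]
    rw [show (fun t => (fun z : ℝ × ℝ => gauss2 ε z * Q.eval (2/ε*(z.1^2+z.2^2))) (w.1, t))
        = Fn ((Real.pi*ε)⁻¹) ε (w.1^2) Q 0 from e2]
    rw [iteratedDeriv_two_Fn _ _ _ hε, iteratedDeriv_two_Fn _ _ _ hε]
  rw [l1]
  simp only [Fn, Dtop, Dbot, gauss2, eval_add, eval_mul, eval_sub, eval_C, eval_X,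
    derivative_zero, derivative_add, derivative_sub, Polynomial.derivative_C_mul,
    eval_zero, mul_zero, add_zero, zero_mul, sub_zero, zero_sub, zero_add]
  rw [show (-(w.2^2 + w.1^2)/ε) = (-(w.1^2+w.2^2)/ε) from by ring]
  field_simp
  ring

/-- Iterated Laplacian of the phase-space Gaussian in one dimension:
`(−(ε/2)Δ)^N G = N! G Σ_{n≤N} binom(N,n) L_n(ρ)` with `ρ(q,p) = (2/ε)(q²+p²)`. -/
theorem iterated_laplacian_gaussian_onedim
    (ε : ℝ) (hε : 0 < ε) (N : ℕ) (z : ℝ × ℝ) :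
    ((fun f : ℝ × ℝ → ℝ => fun w => (-(ε / 2)) * lap2 f w)^[N] (gauss2 ε)) z =
      (Nat.factorial N : ℝ) * gauss2 ε z *
        ∑ n ∈ Finset.range (N + 1), (N.choose n : ℝ) *
          laguerre n (2 / ε * (z.1 ^ 2 + z.2 ^ 2)) := by
  have hε' : ε ≠ 0 := ne_of_gt hε
  have main : ∀ M : ℕ, ((fun f : ℝ × ℝ → ℝ => fun w => (-(ε / 2)) * lap2 f w)^[M] (gauss2 ε))
      = fun w : ℝ × ℝ => gauss2 ε w * (Sp M).eval (2/ε*(w.1^2+w.2^2)) := by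
    intro M
    induction M with
    | zero =>
        funext w
        simp [Sp, aco]
    | succ M ih =>
        rw [Function.iterate_succ_apply', ih]
        funext w
        have := step ε hε' (Sp M) w
        rw [Trec M] at this
        exact this
  rw [main N]
  show gauss2 ε z * (Sp N).eval (2/ε*(z.1^2+z.2^2)) = _
  rw [eval_Sp]
  ring
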